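/- The M'₄ kernel conserves the second moment on the integer lattice: for every x ∈ ℝ, the sum over all integers k of k² · M'₄(x - k) equals x². -/
import Mathlib


noncomputable def M4 (ρ : ℝ) : ℝ :=
  if |ρ| < 1 then 1 - (5 / 2) * ρ ^ 2 + (3 / 2) * |ρ| ^ 3
  else if |ρ| < 2 then (1 / 2) * (2 - |ρ|) ^ 2 * (1 - |ρ|)
  else 0

lemma M4_zero (ρ : ℝ) (h : 2 ≤ |ρ|) : M4 ρ = 0 := by
  unfold M4
  rw [if_neg (by linarith), if_neg (by linarith)]

lemma M4_mid (t : ℝ) (h0 : 0 ≤ t) (h1 : t < 1) :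
    M4 t = 1 - (5 / 2) * t ^ 2 + (3 / 2) * t ^ 3 := by
  have ha : |t| = t := abs_of_nonneg h0
  unfold M4
  rw [if_pos (by rw [ha]; exact h1), ha]

lemma M4_right (t : ℝ) (h0 : 0 ≤ t) (h1 : t < 1) :
    M4 (t + 1) = (1 / 2) * (1 - t) ^ 2 * (-t) := by
  have ha : |t + 1| = t + 1 := abs_of_nonneg (by linarith)
  unfold M4
  rw [if_neg (by rw [ha]; linarith), if_pos (by rw [ha]; linarith), ha]
  ring

lemma M4_left (t : ℝ) (h0 : 0 ≤ t) (h1 : t < 1) :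
    M4 (t - 1) = 1 - (5 / 2) * (t - 1) ^ 2 + (3 / 2) * (1 - t) ^ 3 := by
  have ha : |t - 1| = 1 - t := by rw [abs_of_nonpos (by linarith)]; ring
  unfold M4
  rcases eq_or_lt_of_le h0 with h | h
  · rw [if_neg (by rw [ha]; linarith), if_pos (by rw [ha]; linarith), ha, ← h]
    norm_num
  · rw [if_pos (by rw [ha]; linarith), ha]

lemma M4_far (t : ℝ) (h0 : 0 ≤ t) (h1 : t < 1) :
    M4 (t - 2) = (1 / 2) * t ^ 2 * (t - 1) := by
  have ha : |t - 2| = 2 - t := by rw [abs_of_nonpos (by linarith)]; ring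
  unfold M4
  rcases eq_or_lt_of_le h0 with h | h
  · rw [if_neg (by rw [ha]; linarith), if_neg (by rw [ha]; linarith), ← h]
    norm_num
  · rw [if_neg (by rw [ha]; linarith), if_pos (by rw [ha]; linarith), ha]
    ring

/-- The M'₄ kernel conserves the second moment on the integer lattice. -/
theorem M4_second_moment (x : ℝ) :
    ∑' k : ℤ, (k : ℝ) ^ 2 * M4 (x - (k : ℝ)) = x ^ 2 := by
  set n : ℤ := ⌊x⌋ with hn
  have hfl : (n : ℝ) ≤ x := Int.floor_le x
  have hfu : x < (n : ℝ) + 1 := Int.lt_floor_add_one x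
  set t : ℝ := x - n with ht
  have ht0 : 0 ≤ t := by simp [ht]; linarith
  have ht1 : t < 1 := by simp [ht]; linarith
  have hx : x = (n : ℝ) + t := by ring
  have hzero : ∀ k : ℤ, k ∉ ({n - 1, n, n + 1, n + 2} : Finset ℤ) →
      (k : ℝ) ^ 2 * M4 (x - (k : ℝ)) = 0 := by
    intro k hk
    simp only [Finset.mem_insert, Finset.mem_singleton] at hk
    push_neg at hk
    have : k ≤ n - 2 ∨ n + 3 ≤ k := by omega
    rcases this with h | h
    · have hk2 : (k : ℝ) ≤ (n : ℝ) - 2 := by exact_mod_cast Int.cast_le.mpr h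
      rw [M4_zero _ (by rw [abs_of_nonneg (by linarith)]; linarith), mul_zero]
    · have hk2 : (n : ℝ) + 3 ≤ (k : ℝ) := by exact_mod_cast Int.cast_le.mpr h
      rw [M4_zero _ (by rw [abs_of_nonpos (by linarith)]; linarith), mul_zero]
  rw [tsum_eq_sum hzero]
  have e1 : x - ((n : ℝ) - 1) = t + 1 := by rw [hx]; ring
  have e2 : x - (n : ℝ) = t := by rw [hx]; ring
  have e3 : x - ((n : ℝ) + 1) = t - 1 := by rw [hx]; ring
  have e4 : x - ((n : ℝ) + 2) = t - 2 := by rw [hx]; ring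
  have hs : ({n - 1, n, n + 1, n + 2} : Finset ℤ) =
      insert (n - 1) (insert n (insert (n + 1) {n + 2})) := rfl
  rw [hs, Finset.sum_insert (by simp only [Finset.mem_insert, Finset.mem_singleton]; push_neg; omega), Finset.sum_insert (by simp only [Finset.mem_insert, Finset.mem_singleton]; push_neg; omega),
    Finset.sum_insert (by simp only [Finset.mem_singleton]; omega), Finset.sum_singleton]
  push_cast
  rw [e1, e2, e3, e4, M4_right t ht0 ht1, M4_mid t ht0 ht1, M4_left t ht0 ht1,
    M4_far t ht0 ht1, hx]
  ring
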